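/- Dirichlet Cheeger inequality for the p-Laplacian: for every p ∈ (1,∞) and every nonempty proper subset 𝒱 ⊂ V, λ^D_p(𝒱) ≥ (2^{p−1}/p^p)·(ℐ^D_𝒱)^p, where λ^D_p(𝒱) = inf over nonzero f vanishing on V∖𝒱 of [(1/2)Σ_{x,y}|f(y)−f(x)|^p 𝔪_{xy} / Σ_x|f(x)|^p 𝔪(x)], and ℐ^D_𝒱 = inf over nonempty Ω ⊂ 𝒱 of 𝔪(∂Ω)/𝔪(Ω). -/

import Mathlib

open Finset Filter Topology MeasureTheory
open scoped Classical

noncomputable section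

variable {V : Type*}

/-- Vertex weight `μ(x) = Σ_y μ_{xy}`. -/
def vdeg [Fintype V] (μ : V → V → ℝ) (x : V) : ℝ := ∑ y, μ x y

/-- Transition probability kernel `P(x,y) = μ_{xy}/μ(x)`. -/
def transP [Fintype V] (μ : V → V → ℝ) (x y : V) : ℝ := μ x y / vdeg μ x

/-- `m` is the Perron measure of `(V,μ)`. -/
def IsPerron [Fintype V] (μ : V → V → ℝ) (m : V → ℝ) : Prop :=
  (∀ x, 0 < m x) ∧ (∑ x, m x = 1) ∧ ∀ x, m x = ∑ y, m y * transP μ y x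

/-- Mean transition probability kernel `𝒫 = (P + ←P)/2`. -/
def meanK [Fintype V] (μ : V → V → ℝ) (m : V → ℝ) (x y : V) : ℝ :=
  (transP μ x y + m y / m x * transP μ y x) / 2

/-- There is a directed path of length `n` from `x` to `y`. -/
def HasPathLen (μ : V → V → ℝ) (x y : V) (n : ℕ) : Prop :=
  ∃ c : ℕ → V, c 0 = x ∧ c n = y ∧ ∀ i < n, 0 < μ (c i) (c (i + 1))

/-- The (non-symmetric) graph distance. -/
def gdist (μ : V → V → ℝ) (x y : V) : ℝ :=
  sInf {r : ℝ | ∃ n : ℕ, (r : ℝ) = (n : ℝ) ∧ HasPathLen μ x y n}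

/-- The graph is simple: no loops. -/
def IsSimpleW (μ : V → V → ℝ) : Prop := ∀ x, μ x x = 0

/-- The edge weight is nonnegative. -/
def Nonneg (μ : V → V → ℝ) : Prop := ∀ x y, 0 ≤ μ x y

/-- The graph is strongly connected. -/
def StronglyConnectedW (μ : V → V → ℝ) : Prop := ∀ x y, ∃ n, HasPathLen μ x y n

/-- `π` is a coupling of the probability measures `ν₀, ν₁`. -/
def IsCoupling [Fintype V] (π : V → V → ℝ) (ν₀ ν₁ : V → ℝ) : Prop :=
  (∀ x y, 0 ≤ π x y) ∧ (∀ x, ∑ y, π x y = ν₀ x) ∧ (∀ y, ∑ x, π x y = ν₁ y)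

/-- The L¹-Wasserstein distance with cost `d`. -/
def Wass [Fintype V] (d : V → V → ℝ) (ν₀ ν₁ : V → ℝ) : ℝ :=
  sInf {c : ℝ | ∃ π, IsCoupling π ν₀ ν₁ ∧ c = ∑ x, ∑ y, d x y * π x y}

/-- The probability measure `ν^ε_x`. -/
def nu [Fintype V] (P : V → V → ℝ) (ε : ℝ) (x z : V) : ℝ :=
  if z = x then 1 - ε else ε * P x z

/-- `κ_ε(x,y) = 1 − W(ν^ε_x, ν^ε_y)/d(x,y)`. -/
def kappaEps [Fintype V] (μ : V → V → ℝ) (m : V → ℝ) (ε : ℝ) (x y : V) : ℝ :=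
  1 - Wass (gdist μ) (nu (meanK μ m) ε x) (nu (meanK μ m) ε y) / gdist μ x y

/-- The (positive) Chung Laplacian associated with a kernel `P`. -/
def chungL [Fintype V] (P : V → V → ℝ) (f : V → ℝ) (x : V) : ℝ :=
  f x - ∑ y, P x y * f y

/-- The negative Laplacian `Δ = −ℒ`. -/
def negL [Fintype V] (P : V → V → ℝ) (f : V → ℝ) (x : V) : ℝ :=
  (∑ y, P x y * f y) - f x

/-- `f` is 1-Lipschitz with respect to the non-symmetric distance `d`. -/
def Lip1 (d : V → V → ℝ) (f : V → ℝ) : Prop := ∀ x y, f y - f x ≤ d x y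

/-- The asymptotic mean curvature `ℋ_x = ℒρ_x(x)`. -/
def Hout [Fintype V] (μ : V → V → ℝ) (m : V → ℝ) (x : V) : ℝ :=
  chungL (meanK μ m) (fun y => gdist μ x y) x

/-- The reverse asymptotic mean curvature `←ℋ_x = ℒ←ρ_x(x)`. -/
def Hin [Fintype V] (μ : V → V → ℝ) (m : V → ℝ) (x : V) : ℝ :=
  chungL (meanK μ m) (fun y => gdist μ y x) x

/-- The mixed asymptotic mean curvature `ℋ(x,y) = −(ℋ_x + ←ℋ_y)`. -/
def Hmix [Fintype V] (μ : V → V → ℝ) (m : V → ℝ) (x y : V) : ℝ :=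
  -(Hout μ m x + Hin μ m y)

/-- The neighborhood `𝒩_x = N_x ∪ ←N_x`. -/
def nbr [Fintype V] (μ : V → V → ℝ) (x : V) : Finset V :=
  Finset.univ.filter (fun y => 0 < μ x y ∨ 0 < μ y x)

/-- The boundary measure `𝔪(∂Ω)`. -/
def bdryM {V : Type*} [Fintype V] (w : V → V → ℝ) (Ω : Finset V) : ℝ :=
  ∑ y ∈ Ω, ∑ z ∈ Ωᶜ, w y z

/-- The Dirichlet isoperimetric constant on `𝒱`. -/
def isoD {V : Type*} [Fintype V] (w : V → V → ℝ) (m : V → ℝ) (𝒱 : Finset V) : ℝ :=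
  sInf {r : ℝ | ∃ Ω : Finset V, Ω.Nonempty ∧ Ω ⊆ 𝒱 ∧
    r = bdryM w Ω / ∑ x ∈ Ω, m x}

/-- The Dirichlet `p`-Poincaré constant over `𝒱`. -/
def lamD {V : Type*} [Fintype V] (w : V → V → ℝ) (m : V → ℝ) (p : ℝ) (𝒱 : Finset V) : ℝ :=
  sInf {r : ℝ | ∃ f : V → ℝ, f ≠ 0 ∧ (∀ x ∉ 𝒱, f x = 0) ∧
    r = ((1/2) * ∑ x, ∑ y, |f y - f x| ^ p * w x y) / ∑ x, |f x| ^ p * m x}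

private lemma amg_G_deriv {p : ℝ} (hp : 1 < p) {r : ℝ} (hr0 : 0 < r) (hr1 : r < 1) :
    HasDerivAt (fun s : ℝ => p * (1 - s) * ((1 + s ^ p) / 2) ^ (1 - 1/p) + s ^ p)
      ((-p) * ((1 + r ^ p) / 2) ^ (1 - 1/p)
        + p * (1 - r) * ((1 - 1/p) * ((1 + r ^ p) / 2) ^ ((1 - 1/p) - 1) * (p * r ^ (p - 1) / 2))
        + p * r ^ (p - 1)) r := by
  have hM : (0:ℝ) < (1 + r ^ p) / 2 := by
    have := Real.rpow_nonneg hr0.le p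
    linarith
  have h1 : HasDerivAt (fun s : ℝ => s ^ p) (p * r ^ (p - 1)) r :=
    Real.hasDerivAt_rpow_const (Or.inl hr0.ne')
  have h2 : HasDerivAt (fun s : ℝ => (1 + s ^ p) / 2) (p * r ^ (p - 1) / 2) r :=
    (h1.const_add 1).div_const 2
  have h3 : HasDerivAt (fun y : ℝ => y ^ (1 - 1/p))
      ((1 - 1/p) * ((1 + r ^ p) / 2) ^ ((1 - 1/p) - 1)) ((1 + r ^ p) / 2) :=
    Real.hasDerivAt_rpow_const (Or.inl hM.ne')
  have h4 : HasDerivAt (fun s : ℝ => ((1 + s ^ p) / 2) ^ (1 - 1/p))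
      ((1 - 1/p) * ((1 + r ^ p) / 2) ^ ((1 - 1/p) - 1) * (p * r ^ (p - 1) / 2)) r :=
    by have h := h3.comp r h2; exact h
  have h5 : HasDerivAt (fun s : ℝ => p * (1 - s)) (-p) r := by
    simpa using ((hasDerivAt_id r).const_sub 1).const_mul p
  exact (h5.mul h4).add h1

private lemma amg_G_deriv_nonpos {p : ℝ} (hp : 1 < p) {r : ℝ} (hr0 : 0 < r) (hr1 : r < 1) :
    (-p) * ((1 + r ^ p) / 2) ^ (1 - 1/p)
        + p * (1 - r) * ((1 - 1/p) * ((1 + r ^ p) / 2) ^ ((1 - 1/p) - 1) * (p * r ^ (p - 1) / 2))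
        + p * r ^ (p - 1) ≤ 0 := by
  have hp0 : (0:ℝ) < p := by linarith
  have hY : (0:ℝ) < r ^ p := Real.rpow_pos_of_pos hr0 p
  have hX : (0:ℝ) < r ^ (p - 1) := Real.rpow_pos_of_pos hr0 (p - 1)
  have hM : (0:ℝ) < (1 + r ^ p) / 2 := by linarith
  have hZ : (0:ℝ) < ((1 + r ^ p) / 2) ^ (1/p) := Real.rpow_pos_of_pos hM _
  have e1 : ((1 + r ^ p) / 2) ^ (1 - 1/p) * ((1 + r ^ p) / 2) ^ (1/p) = (1 + r ^ p) / 2 := by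
    rw [← Real.rpow_add hM, show (1 - 1/p) + 1/p = 1 by ring, Real.rpow_one]
  have e2 : ((1 + r ^ p) / 2) ^ ((1 - 1/p) - 1) * ((1 + r ^ p) / 2) ^ (1/p) = 1 := by
    rw [← Real.rpow_add hM, show ((1 - 1/p) - 1) + 1/p = 0 by ring, Real.rpow_zero]
  -- AM-GM 1 : r^(p-1) * M^(1/p) ≤ (1-1/p) * r^p + (1/p) * M
  have K1 : r ^ (p - 1) * ((1 + r ^ p) / 2) ^ (1/p)
      ≤ (1 - 1/p) * r ^ p + (1/p) * ((1 + r ^ p) / 2) := by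
    have hAM := Real.geom_mean_le_arith_mean2_weighted
      (by rw [sub_nonneg, div_le_one hp0]; linarith : (0:ℝ) ≤ 1 - 1/p)
      (by positivity : (0:ℝ) ≤ 1/p) hY.le hM.le (by ring)
    calc r ^ (p - 1) * ((1 + r ^ p) / 2) ^ (1/p)
        = (r ^ p) ^ (1 - 1/p) * ((1 + r ^ p) / 2) ^ (1/p) := by
          rw [← Real.rpow_mul hr0.le]
          congr 1
          field_simp
      _ ≤ (1 - 1/p) * r ^ p + (1/p) * ((1 + r ^ p) / 2) := hAM
  -- AM-GM 2 : p * r^(p-1) ≤ 1 + (p-1) * r^p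
  have K2 : p * ((1 - r) * r ^ (p - 1)) ≤ 1 - r ^ p := by
    have hAM := Real.geom_mean_le_arith_mean2_weighted
      (by positivity : (0:ℝ) ≤ 1/p)
      (by rw [sub_nonneg, div_le_one hp0]; linarith : (0:ℝ) ≤ 1 - 1/p)
      (zero_le_one) hY.le (by ring)
    rw [Real.one_rpow] at hAM
    have hXp : (r ^ p) ^ (1 - 1/p) = r ^ (p - 1) := by
      rw [← Real.rpow_mul hr0.le]
      congr 1
      field_simp
    rw [hXp] at hAM
    -- hAM : 1 * r ^ (p-1) ≤ 1/p * 1 + (1 - 1/p) * r^p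
    have hrr : r * r ^ (p - 1) = r ^ p := by
      have h7 := Real.rpow_add hr0 1 (p - 1)
      rw [Real.rpow_one] at h7
      rw [show (1:ℝ) + (p - 1) = p by ring] at h7
      exact h7.symm
    have h6 : p * r ^ (p - 1) ≤ 1 + (p - 1) * r ^ p := by
      have := mul_le_mul_of_nonneg_left hAM hp0.le
      calc p * r ^ (p - 1) = p * (1 * r ^ (p - 1)) := by ring
        _ ≤ p * (1/p * 1 + (1 - 1/p) * r ^ p) := this
        _ = 1 + (p - 1) * r ^ p := by field_simp
    nlinarith [hrr, h6, hp0]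
  -- multiply the goal by Z := M^(1/p) > 0
  have s2 : p * (r ^ (p - 1) * ((1 + r ^ p) / 2) ^ (1/p))
      ≤ (p - 1) * r ^ p + (1 + r ^ p) / 2 := by
    have := mul_le_mul_of_nonneg_left K1 hp0.le
    calc p * (r ^ (p - 1) * ((1 + r ^ p) / 2) ^ (1/p))
        ≤ p * ((1 - 1/p) * r ^ p + (1/p) * ((1 + r ^ p) / 2)) := this
      _ = (p - 1) * r ^ p + (1 + r ^ p) / 2 := by field_simp
  have s1 : (p - 1)/2 * (p * ((1 - r) * r ^ (p - 1))) ≤ (p - 1)/2 * (1 - r ^ p) :=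
    mul_le_mul_of_nonneg_left K2 (by linarith)
  have expand : ((-p) * ((1 + r ^ p) / 2) ^ (1 - 1/p)
        + p * (1 - r) * ((1 - 1/p) * ((1 + r ^ p) / 2) ^ ((1 - 1/p) - 1) * (p * r ^ (p - 1) / 2))
        + p * r ^ (p - 1)) * ((1 + r ^ p) / 2) ^ (1/p)
      = (-p) * (((1 + r ^ p) / 2) ^ (1 - 1/p) * ((1 + r ^ p) / 2) ^ (1/p))
        + (p * (1 - r) * ((1 - 1/p) * (p * r ^ (p - 1) / 2)))
            * (((1 + r ^ p) / 2) ^ ((1 - 1/p) - 1) * ((1 + r ^ p) / 2) ^ (1/p))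
        + p * (r ^ (p - 1) * ((1 + r ^ p) / 2) ^ (1/p)) := by ring
  rw [e1, e2] at expand
  have hcoef : p * (1 - r) * ((1 - 1/p) * (p * r ^ (p - 1) / 2)) * 1
      = (p - 1)/2 * (p * ((1 - r) * r ^ (p - 1))) := by field_simp
  rw [hcoef] at expand
  have hfinal : ((-p) * ((1 + r ^ p) / 2) ^ (1 - 1/p)
        + p * (1 - r) * ((1 - 1/p) * ((1 + r ^ p) / 2) ^ ((1 - 1/p) - 1) * (p * r ^ (p - 1) / 2))
        + p * r ^ (p - 1)) * ((1 + r ^ p) / 2) ^ (1/p) ≤ 0 := by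
    rw [expand]; linarith
  by_contra hcon
  push_neg at hcon
  nlinarith [mul_pos hcon hZ]

private lemma amg_aux {p : ℝ} (hp : 1 < p) {r : ℝ} (hr0 : 0 ≤ r) (hr1 : r ≤ 1) :
    1 - r ^ p ≤ p * (1 - r) * ((1 + r ^ p) / 2) ^ (1 - 1/p) := by
  set G : ℝ → ℝ := fun s => p * (1 - s) * ((1 + s ^ p) / 2) ^ (1 - 1/p) + s ^ p with hG
  have hpnn : (0:ℝ) ≤ p := by linarith
  have hc : (0:ℝ) ≤ 1 - 1/p := by
    have : 1/p < 1 := by rw [div_lt_one (by linarith)]; linarith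
    linarith
  have contG : Continuous G := by
    have c1 : Continuous fun s : ℝ => s ^ p := Real.continuous_rpow_const hpnn
    have c2 : Continuous fun s : ℝ => ((1 + s ^ p) / 2) ^ (1 - 1/p) :=
      (Real.continuous_rpow_const hc).comp ((continuous_const.add c1).div_const 2)
    exact ((continuous_const.mul (continuous_const.sub continuous_id)).mul c2).add c1
  have anti : AntitoneOn G (Set.Icc 0 1) := by
    apply antitoneOn_of_deriv_nonpos (convex_Icc 0 1) contG.continuousOn
    · intro x hx
      rw [interior_Icc] at hx
      exact (amg_G_deriv hp hx.1 hx.2).differentiableAt.differentiableWithinAt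
    · intro x hx
      rw [interior_Icc] at hx
      rw [(amg_G_deriv hp hx.1 hx.2).deriv]
      exact amg_G_deriv_nonpos hp hx.1 hx.2
  have hG1 : G 1 = 1 := by
    simp [hG, Real.one_rpow]
  have := anti (Set.mem_Icc.mpr ⟨hr0, hr1⟩) (Set.mem_Icc.mpr ⟨zero_le_one, le_rfl⟩) hr1
  rw [hG1] at this
  simp only [hG] at this
  linarith

/-- Amghibech's inequality. -/
private lemma amghibech_le {p : ℝ} (hp : 1 < p) {a b : ℝ} (ha : 0 ≤ a) (hab : a ≤ b) :
    b ^ p - a ^ p ≤ p * (b - a) * ((a ^ p + b ^ p) / 2) ^ (1 - 1/p) := by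
  rcases eq_or_lt_of_le (ha.trans hab) with hb | hb0
  · -- b = 0, hence a = 0
    have hb : b = 0 := hb.symm
    have ha0 : a = 0 := le_antisymm (hb ▸ hab) ha
    simp [hb, ha0, Real.zero_rpow (by positivity : p ≠ 0)]
  · have key := amg_aux hp (div_nonneg ha hb0.le) ((div_le_one hb0).mpr hab)
    have hbp : (0:ℝ) < b ^ p := Real.rpow_pos_of_pos hb0 p
    have e1 : (a / b) ^ p = a ^ p / b ^ p := Real.div_rpow ha hb0.le p
    have hmul := mul_le_mul_of_nonneg_right key hbp.le
    have hL : (1 - (a / b) ^ p) * b ^ p = b ^ p - a ^ p := by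
      rw [e1]; field_simp
    have hpne : p ≠ 0 := by positivity
    have hsplit : b ^ p = b * b ^ (p - 1) := by
      have h7 := Real.rpow_add hb0 1 (p - 1)
      rw [Real.rpow_one] at h7
      rw [show (1:ℝ) + (p - 1) = p by ring] at h7
      exact h7
    have hbp1 : (b ^ p) ^ (1 - 1/p) = b ^ (p - 1) := by
      rw [← Real.rpow_mul hb0.le]
      congr 1
      field_simp
    have hmm : ((1 + (a / b) ^ p) / 2) ^ (1 - 1/p) * (b ^ p) ^ (1 - 1/p)
        = ((a ^ p + b ^ p) / 2) ^ (1 - 1/p) := by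
      rw [← Real.mul_rpow (by positivity) hbp.le]
      congr 1
      rw [e1]
      field_simp
      ring
    have hR : p * (1 - a / b) * ((1 + (a / b) ^ p) / 2) ^ (1 - 1/p) * b ^ p
        = p * (b - a) * ((a ^ p + b ^ p) / 2) ^ (1 - 1/p) := by
      have stepA : p * (1 - a / b) * ((1 + (a / b) ^ p) / 2) ^ (1 - 1/p) * b ^ p
          = (p * ((1 - a / b) * b))
            * (((1 + (a / b) ^ p) / 2) ^ (1 - 1/p) * (b ^ p) ^ (1 - 1/p)) := by
        rw [hbp1]
        rw [hsplit]
        ring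
      rw [stepA, hmm]
      have hab' : (1 - a / b) * b = b - a := by field_simp
      rw [hab']
    rw [hL, hR] at hmul
    exact hmul

private lemma amghibech {p : ℝ} (hp : 1 < p) {a b : ℝ} (ha : 0 ≤ a) (hb : 0 ≤ b) :
    |b ^ p - a ^ p| ≤ p * |b - a| * ((a ^ p + b ^ p) / 2) ^ (1 - 1/p) := by
  rcases le_total a b with hab | hab
  · have h1 := amghibech_le hp ha hab
    have hmono : a ^ p ≤ b ^ p := Real.rpow_le_rpow ha hab (by linarith)
    rw [abs_of_nonneg (by linarith), abs_of_nonneg (by linarith)]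
    exact h1
  · have h1 := amghibech_le hp hb hab
    have hmono : b ^ p ≤ a ^ p := Real.rpow_le_rpow hb hab (by linarith)
    rw [abs_sub_comm, abs_sub_comm b a, abs_of_nonneg (by linarith),
      abs_of_nonneg (by linarith), show a ^ p + b ^ p = b ^ p + a ^ p from add_comm _ _]
    exact h1

private lemma abs_min_split {t a b : ℝ} (hab : a ≤ b) :
    |b - a| = |min b t - min a t| + |(b - min b t) - (a - min a t)| := by
  have h1 : min a t ≤ min b t := min_le_min hab le_rfl
  have h2 : a - min a t ≤ b - min b t := by
    rcases le_total a t with h | h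
    · have := min_le_left b t
      rw [min_eq_left h]
      linarith
    · rw [min_eq_right h, min_eq_right (h.trans hab)]
      linarith
  rw [abs_of_nonneg (by linarith), abs_of_nonneg (by linarith), abs_of_nonneg (by linarith)]
  ring

private lemma abs_min_split' (t a b : ℝ) :
    |b - a| = |min b t - min a t| + |(b - min b t) - (a - min a t)| := by
  rcases le_total a b with hab | hab
  · exact abs_min_split hab
  · rw [abs_sub_comm, abs_sub_comm (min b t), abs_sub_comm (b - min b t)]
    exact abs_min_split hab

private lemma coarea {V : Type*} [Fintype V] (w : V → V → ℝ) (m : V → ℝ) (𝒱 : Finset V)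
    (hwnn : ∀ x y, 0 ≤ w x y) (hsymm : ∀ x y, w x y = w y x) (hmpos : ∀ x, 0 < m x) :
    ∀ h : V → ℝ, (∀ x, 0 ≤ h x) → (∀ x ∉ 𝒱, h x = 0) →
      isoD w m 𝒱 * ∑ x, h x * m x ≤ (1/2) * ∑ x, ∑ y, |h y - h x| * w x y := by
  suffices H : ∀ n : ℕ, ∀ h : V → ℝ, (Finset.univ.filter fun x => h x ≠ 0).card ≤ n →
      (∀ x, 0 ≤ h x) → (∀ x ∉ 𝒱, h x = 0) →
      isoD w m 𝒱 * ∑ x, h x * m x ≤ (1/2) * ∑ x, ∑ y, |h y - h x| * w x y by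
    exact fun h h1 h2 => H _ h le_rfl h1 h2
  intro n
  induction n with
  | zero =>
    intro h hcard hnn hsupp
    have hzero : ∀ x, h x = 0 := by
      intro x
      by_contra hx
      have hmem : x ∈ Finset.univ.filter fun x => h x ≠ 0 := by simp [hx]
      have := Finset.card_pos.mpr ⟨x, hmem⟩
      omega
    simp [hzero]
  | succ n ih =>
    intro h hcard hnn hsupp
    set S := Finset.univ.filter fun x => h x ≠ 0 with hS
    rcases S.eq_empty_or_nonempty with hSe | hSne
    · have hzero : ∀ x, h x = 0 := by
        intro x
        by_contra hx
        have hmem : x ∈ S := by simp [hS, hx]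
        rw [hSe] at hmem
        exact absurd hmem (Finset.notMem_empty x)
      simp [hzero]
    · obtain ⟨x₀, hx₀S, hx₀min⟩ := S.exists_min_image h hSne
      have hSmem : ∀ x, x ∈ S ↔ h x ≠ 0 := by intro x; simp [hS]
      have ht0 : 0 < h x₀ := lt_of_le_of_ne (hnn x₀) (Ne.symm ((hSmem x₀).mp hx₀S))
      set t := h x₀ with htdef
      set h1 : V → ℝ := fun x => min (h x) t with hh1
      set h2 : V → ℝ := fun x => h x - min (h x) t with hh2
      have hht : ∀ x ∈ S, t ≤ h x := fun x hx => hx₀min x hx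
      have hh1S : ∀ x ∈ S, h1 x = t := fun x hx => min_eq_right (hht x hx)
      have hh1nS : ∀ x ∉ S, h1 x = 0 := by
        intro x hx
        have hx0 : h x = 0 := by
          by_contra hne; exact hx ((hSmem x).mpr hne)
        simp only [hh1, hx0]
        exact min_eq_left ht0.le
      -- support of h2
      have hsub2 : (Finset.univ.filter fun x => h2 x ≠ 0) ⊆ S.erase x₀ := by
        intro x hx
        rw [Finset.mem_filter] at hx
        have hx2 : h2 x ≠ 0 := hx.2
        have hlt : t < h x := by
          rcases le_or_gt (h x) t with hle | hlt
          · exfalso; apply hx2; simp only [hh2, min_eq_left hle]; ring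
          · exact hlt
        refine Finset.mem_erase.mpr ⟨?_, (hSmem x).mpr (by linarith)⟩
        rintro rfl
        exact absurd hlt (lt_irrefl t)
      have hc2 : (Finset.univ.filter fun x => h2 x ≠ 0).card ≤ n := by
        have hle := Finset.card_le_card hsub2
        rw [Finset.card_erase_of_mem hx₀S] at hle
        have hcS : S.card ≤ n + 1 := hcard
        omega
      have IH2 := ih h2 hc2 (fun x => sub_nonneg.mpr (min_le_left _ _))
        (fun x hx => by simp only [hh2, hsupp x hx, min_eq_left ht0.le]; ring)
      -- step function part
      have hSsub : S ⊆ 𝒱 := by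
        intro x hx
        by_contra hxV
        exact (hSmem x).mp hx (hsupp x hxV)
      have hmS : 0 < ∑ x ∈ S, m x := Finset.sum_pos (fun i _ => hmpos i) hSne
      have hiso_le : isoD w m 𝒱 * ∑ x ∈ S, m x ≤ bdryM w S := by
        have hbdd : BddBelow {r : ℝ | ∃ Ω : Finset V, Ω.Nonempty ∧ Ω ⊆ 𝒱 ∧
            r = bdryM w Ω / ∑ x ∈ Ω, m x} := by
          refine ⟨0, ?_⟩
          rintro r ⟨Ω, hΩ1, hΩ2, rfl⟩
          apply div_nonneg
          · exact Finset.sum_nonneg fun a _ => Finset.sum_nonneg fun b _ => hwnn a b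
          · exact Finset.sum_nonneg fun a _ => (hmpos a).le
        have hmem : bdryM w S / ∑ x ∈ S, m x ∈ {r : ℝ | ∃ Ω : Finset V, Ω.Nonempty ∧ Ω ⊆ 𝒱 ∧
            r = bdryM w Ω / ∑ x ∈ Ω, m x} := ⟨S, hSne, hSsub, rfl⟩
        have hle := csInf_le hbdd hmem
        rw [isoD]
        calc sInf {r : ℝ | ∃ Ω : Finset V, Ω.Nonempty ∧ Ω ⊆ 𝒱 ∧
              r = bdryM w Ω / ∑ x ∈ Ω, m x} * ∑ x ∈ S, m x
            ≤ (bdryM w S / ∑ x ∈ S, m x) * ∑ x ∈ S, m x :=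
              mul_le_mul_of_nonneg_right hle hmS.le
          _ = bdryM w S := div_mul_cancel₀ _ hmS.ne'
      have hsum1 : ∑ x, h1 x * m x = t * ∑ x ∈ S, m x := by
        have e : ∀ x, h1 x * m x = if x ∈ S then t * m x else 0 := by
          intro x
          by_cases hx : x ∈ S
          · rw [hh1S x hx]; simp [hx]
          · rw [hh1nS x hx]; simp [hx]
        calc ∑ x, h1 x * m x = ∑ x, if x ∈ S then t * m x else 0 :=
              Finset.sum_congr rfl fun x _ => e x
          _ = ∑ x ∈ S, t * m x := by rw [Finset.sum_ite_mem, Finset.univ_inter]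
          _ = t * ∑ x ∈ S, m x := by rw [Finset.mul_sum]
      have hpoint : ∀ x y, |h1 y - h1 x| * w x y
          = (if x ∈ S ∧ y ∉ S then t * w x y else 0)
            + (if x ∉ S ∧ y ∈ S then t * w x y else 0) := by
        intro x y
        by_cases hx : x ∈ S <;> by_cases hy : y ∈ S
        · rw [hh1S x hx, hh1S y hy]; simp [hx, hy]
        · rw [hh1S x hx, hh1nS y hy, zero_sub, abs_neg, abs_of_pos ht0]; simp [hx, hy]
        · rw [hh1nS x hx, hh1S y hy, sub_zero, abs_of_pos ht0]; simp [hx, hy]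
        · rw [hh1nS x hx, hh1nS y hy]; simp [hx, hy]
      have inner1 : ∀ x : V, (∑ y, if x ∈ S ∧ y ∉ S then t * w x y else 0)
          = if x ∈ S then ∑ y ∈ Sᶜ, t * w x y else 0 := by
        intro x
        by_cases hx : x ∈ S
        · simp only [hx, true_and, if_true]
          rw [← Finset.sum_filter]
          congr 1
          ext y; simp
        · simp [hx]
      have inner2 : ∀ y : V, (∑ x, if x ∉ S ∧ y ∈ S then t * w x y else 0)
          = if y ∈ S then ∑ x ∈ Sᶜ, t * w x y else 0 := by
        intro y
        by_cases hy : y ∈ S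
        · simp only [hy, and_true, if_true]
          rw [← Finset.sum_filter]
          congr 1
          ext x; simp
        · simp [hy]
      have hfiltS : Finset.univ.filter (fun x => x ∈ S) = S := by ext x; simp
      have hsum_ite1 : (∑ x, ∑ y, if x ∈ S ∧ y ∉ S then t * w x y else 0) = t * bdryM w S := by
        rw [Finset.sum_congr rfl fun x _ => inner1 x, ← Finset.sum_filter, hfiltS, bdryM,
          Finset.mul_sum]
        exact Finset.sum_congr rfl fun x _ => by rw [Finset.mul_sum]
      have hsum_ite2 : (∑ x, ∑ y, if x ∉ S ∧ y ∈ S then t * w x y else 0) = t * bdryM w S := by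
        rw [Finset.sum_comm, Finset.sum_congr rfl fun y _ => inner2 y, ← Finset.sum_filter,
          hfiltS, bdryM, Finset.mul_sum]
        refine Finset.sum_congr rfl fun y _ => ?_
        rw [Finset.mul_sum]
        exact Finset.sum_congr rfl fun x _ => by rw [hsymm x y]
      have hE1 : ∑ x, ∑ y, |h1 y - h1 x| * w x y = t * bdryM w S + t * bdryM w S := by
        calc ∑ x, ∑ y, |h1 y - h1 x| * w x y
            = ∑ x, ∑ y, ((if x ∈ S ∧ y ∉ S then t * w x y else 0)
              + (if x ∉ S ∧ y ∈ S then t * w x y else 0)) :=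
              Finset.sum_congr rfl fun x _ => Finset.sum_congr rfl fun y _ => hpoint x y
          _ = (∑ x, ∑ y, if x ∈ S ∧ y ∉ S then t * w x y else 0)
              + ∑ x, ∑ y, if x ∉ S ∧ y ∈ S then t * w x y else 0 := by
              simp only [Finset.sum_add_distrib]
          _ = t * bdryM w S + t * bdryM w S := by rw [hsum_ite1, hsum_ite2]
      have claim1 : isoD w m 𝒱 * ∑ x, h1 x * m x
          ≤ (1/2) * ∑ x, ∑ y, |h1 y - h1 x| * w x y := by
        rw [hsum1, hE1]
        calc isoD w m 𝒱 * (t * ∑ x ∈ S, m x) = t * (isoD w m 𝒱 * ∑ x ∈ S, m x) := by ring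
          _ ≤ t * bdryM w S := mul_le_mul_of_nonneg_left hiso_le ht0.le
          _ = (1/2) * (t * bdryM w S + t * bdryM w S) := by ring
      -- combine
      have hdecomp : ∀ x, h x = h1 x + h2 x := by
        intro x; simp only [hh1, hh2]; ring
      have habs : ∀ x y, |h y - h x| = |h1 y - h1 x| + |h2 y - h2 x| := by
        intro x y
        simp only [hh1, hh2]
        exact abs_min_split' t (h x) (h y)
      calc isoD w m 𝒱 * ∑ x, h x * m x
          = isoD w m 𝒱 * ∑ x, h1 x * m x + isoD w m 𝒱 * ∑ x, h2 x * m x := by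
            have e : ∑ x, h x * m x = ∑ x, (h1 x * m x + h2 x * m x) :=
              Finset.sum_congr rfl fun x _ => by rw [hdecomp x]; ring
            rw [e, Finset.sum_add_distrib, mul_add]
        _ ≤ (1/2) * (∑ x, ∑ y, |h1 y - h1 x| * w x y)
            + (1/2) * ∑ x, ∑ y, |h2 y - h2 x| * w x y := add_le_add claim1 IH2
        _ = (1/2) * ∑ x, ∑ y, |h y - h x| * w x y := by
            have e : ∑ x, ∑ y, |h y - h x| * w x y
                = ∑ x, ∑ y, (|h1 y - h1 x| * w x y + |h2 y - h2 x| * w x y) :=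
              Finset.sum_congr rfl fun x _ => Finset.sum_congr rfl fun y _ => by
                rw [habs x y]; ring
            rw [e]
            simp only [Finset.sum_add_distrib]
            ring


/-- Dirichlet Cheeger inequality for the `p`-Laplacian. -/
theorem dirichlet_cheeger
    {V : Type*} [Fintype V] (μ : V → V → ℝ) (m : V → ℝ)
    (hnn : Nonneg μ) (hconn : StronglyConnectedW μ) (hm : IsPerron μ m)
    (p : ℝ) (hp : 1 < p)
    (𝒱 : Finset V) (h𝒱 : 𝒱.Nonempty) (h𝒱' : 𝒱 ≠ Finset.univ) :
    (2 ^ (p - 1) / p ^ p) * (isoD (fun x y => m x * meanK μ m x y) m 𝒱) ^ p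
      ≤ lamD (fun x y => m x * meanK μ m x y) m p 𝒱 := by
  classical
  obtain ⟨hmpos, hmsum, hmstat⟩ := hm
  set w : V → V → ℝ := fun x y => m x * meanK μ m x y with hwdef
  have hp0 : (0:ℝ) < p := by linarith
  have hpne : p ≠ 0 := hp0.ne'
  have hp1ne : p - 1 ≠ 0 := by intro hc; rw [sub_eq_zero] at hc; exact absurd hc.symm hp.ne
  -- vdeg positive
  have hvd : ∀ x, 0 < vdeg μ x := by
    intro x
    obtain ⟨a, haV⟩ := h𝒱
    obtain ⟨b, hbV⟩ : ∃ b, b ∉ 𝒱 := by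
      by_contra hcon
      push_neg at hcon
      exact h𝒱' (Finset.eq_univ_iff_forall.mpr hcon)
    have hy : ∃ y, y ≠ x := by
      by_cases hax : a = x
      · refine ⟨b, ?_⟩
        rintro rfl
        exact hbV (hax ▸ haV)
      · exact ⟨a, hax⟩
    obtain ⟨y, hyx⟩ := hy
    obtain ⟨n, c, hc0, hcn, hstep⟩ := hconn x y
    have hn : n ≠ 0 := by
      rintro rfl
      exact hyx (hc0.symm.trans hcn).symm
    have hpos := hstep 0 (Nat.pos_of_ne_zero hn)
    rw [hc0] at hpos
    calc (0:ℝ) < μ x (c 1) := hpos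
      _ ≤ vdeg μ x := Finset.single_le_sum (fun i _ => hnn x i) (Finset.mem_univ _)
  have htP : ∀ x y, 0 ≤ transP μ x y := fun x y => div_nonneg (hnn x y) (hvd x).le
  have hrow1 : ∀ x, ∑ y, transP μ x y = 1 := by
    intro x
    simp only [transP]
    rw [← Finset.sum_div]
    exact div_self (hvd x).ne'
  have hwsymm' : ∀ x y, w x y = (m x * transP μ x y + m y * transP μ y x) / 2 := by
    intro x y
    simp only [hwdef, meanK]
    field_simp [(hmpos x).ne']
  have hwnn : ∀ x y, 0 ≤ w x y := by
    intro x y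
    rw [hwsymm']
    have h1 := mul_nonneg (hmpos x).le (htP x y)
    have h2 := mul_nonneg (hmpos y).le (htP y x)
    linarith
  have hwsymm : ∀ x y, w x y = w y x := by
    intro x y; rw [hwsymm', hwsymm' y x]; ring
  have hwrow : ∀ x, ∑ y, w x y = m x := by
    intro x
    calc ∑ y, w x y = ∑ y, (m x * transP μ x y + m y * transP μ y x) / 2 :=
          Finset.sum_congr rfl fun y _ => hwsymm' x y
      _ = ((∑ y, m x * transP μ x y) + ∑ y, m y * transP μ y x) / 2 := by
          rw [← Finset.sum_div, Finset.sum_add_distrib]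
      _ = (m x * 1 + m x) / 2 := by rw [← Finset.mul_sum, hrow1 x, ← hmstat x]
      _ = m x := by ring
  have hwcol : ∀ y, ∑ x, w x y = m y := by
    intro y
    calc ∑ x, w x y = ∑ x, w y x := Finset.sum_congr rfl fun x _ => hwsymm x y
      _ = m y := hwrow y
  have hI0 : 0 ≤ isoD w m 𝒱 := by
    rw [isoD]
    apply Real.sInf_nonneg
    rintro r ⟨Ω, hΩne, hΩsub, rfl⟩
    apply div_nonneg
    · exact Finset.sum_nonneg fun a _ => Finset.sum_nonneg fun b _ => hwnn a b
    · exact Finset.sum_nonneg fun a _ => (hmpos a).le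
  rw [lamD]
  apply le_csInf
  · refine ⟨_, ⟨fun x => if x ∈ 𝒱 then 1 else 0, ?_, ?_, rfl⟩⟩
    · obtain ⟨a, ha⟩ := h𝒱
      intro hcon
      have := congrFun hcon a
      simp [ha] at this
    · intro x hx; simp [hx]
  rintro r ⟨f, hf0, hfz, rfl⟩
  set I := isoD w m 𝒱 with hIdef
  set B := ∑ x, |f x| ^ p * m x with hBdef
  set A := ∑ x, ∑ y, |(|f y| - |f x|)| ^ p * w x y with hAdef
  set Af := ∑ x, ∑ y, |f y - f x| ^ p * w x y with hAfdef
  have hB : 0 < B := by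
    obtain ⟨x, hx⟩ : ∃ x, f x ≠ 0 := by
      by_contra hcon; push_neg at hcon; exact hf0 (funext hcon)
    apply Finset.sum_pos' (fun i _ => mul_nonneg (Real.rpow_nonneg (abs_nonneg _) p) (hmpos i).le)
    exact ⟨x, Finset.mem_univ x, mul_pos (Real.rpow_pos_of_pos (abs_pos.mpr hx) p) (hmpos x)⟩
  have hA : 0 ≤ A :=
    Finset.sum_nonneg fun x _ => Finset.sum_nonneg fun y _ =>
      mul_nonneg (Real.rpow_nonneg (abs_nonneg _) p) (hwnn x y)
  -- co-area applied to h := fun x => |f x| ^ p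
  have hco : I * B ≤ (1/2) * ∑ x, ∑ y, |(|f y| ^ p - |f x| ^ p)| * w x y :=
    coarea w m 𝒱 hwnn hwsymm hmpos (fun x => |f x| ^ p)
      (fun x => Real.rpow_nonneg (abs_nonneg _) p)
      (fun x hx => by show |f x| ^ p = 0; rw [hfz x hx]; simp [Real.zero_rpow hpne])
  -- Amghibech pointwise
  have hamg : ∑ x, ∑ y, |(|f y| ^ p - |f x| ^ p)| * w x y
      ≤ p * ∑ x, ∑ y, |(|f y| - |f x|)| * ((|f x| ^ p + |f y| ^ p) / 2) ^ (1 - 1/p) * w x y := by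
    have hpt : ∀ x y, |(|f y| ^ p - |f x| ^ p)| * w x y
        ≤ p * (|(|f y| - |f x|)| * ((|f x| ^ p + |f y| ^ p) / 2) ^ (1 - 1/p) * w x y) := by
      intro x y
      have ham := amghibech hp (abs_nonneg (f x)) (abs_nonneg (f y))
      calc |(|f y| ^ p - |f x| ^ p)| * w x y
          ≤ (p * |(|f y| - |f x|)| * ((|f x| ^ p + |f y| ^ p) / 2) ^ (1 - 1/p)) * w x y :=
            mul_le_mul_of_nonneg_right ham (hwnn x y)
        _ = p * (|(|f y| - |f x|)| * ((|f x| ^ p + |f y| ^ p) / 2) ^ (1 - 1/p) * w x y) := by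
            ring
    calc ∑ x, ∑ y, |(|f y| ^ p - |f x| ^ p)| * w x y
        ≤ ∑ x, ∑ y, p * (|(|f y| - |f x|)| * ((|f x| ^ p + |f y| ^ p) / 2) ^ (1 - 1/p) * w x y) :=
          Finset.sum_le_sum fun x _ => Finset.sum_le_sum fun y _ => hpt x y
      _ = p * ∑ x, ∑ y, |(|f y| - |f x|)| * ((|f x| ^ p + |f y| ^ p) / 2) ^ (1 - 1/p) * w x y := by
          simp only [← Finset.mul_sum]
  -- mean sum identity
  have hMW : ∑ x, ∑ y, ((|f x| ^ p + |f y| ^ p) / 2) * w x y = B := by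
    have e : ∀ x y : V, ((|f x| ^ p + |f y| ^ p) / 2) * w x y
        = (|f x| ^ p * w x y) / 2 + (|f y| ^ p * w x y) / 2 := by intro x y; ring
    calc ∑ x, ∑ y, ((|f x| ^ p + |f y| ^ p) / 2) * w x y
        = ∑ x, ∑ y, ((|f x| ^ p * w x y) / 2 + (|f y| ^ p * w x y) / 2) :=
          Finset.sum_congr rfl fun x _ => Finset.sum_congr rfl fun y _ => e x y
      _ = (∑ x, ∑ y, (|f x| ^ p * w x y) / 2) + ∑ x, ∑ y, (|f y| ^ p * w x y) / 2 := by
          simp only [Finset.sum_add_distrib]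
      _ = (∑ x, (|f x| ^ p * m x) / 2) + ∑ y, (|f y| ^ p * m y) / 2 := by
          congr 1
          · exact Finset.sum_congr rfl fun x _ => by
              rw [← Finset.sum_div, ← Finset.mul_sum, hwrow x]
          · rw [Finset.sum_comm]
            exact Finset.sum_congr rfl fun y _ => by
              rw [← Finset.sum_div, ← Finset.mul_sum, hwcol y]
      _ = B := by
          rw [hBdef, ← Finset.sum_add_distrib]
          exact Finset.sum_congr rfl fun x _ => by ring
  -- Hölder
  have hq : Real.HolderConjugate p (p / (p - 1)) :=
    Real.HolderConjugate.conjExponent hp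
  have hq1 : 1 / (p / (p - 1)) = 1 - 1/p := by
    rw [one_div, inv_div]
    field_simp
  have hT : ∑ x, ∑ y, |(|f y| - |f x|)| * ((|f x| ^ p + |f y| ^ p) / 2) ^ (1 - 1/p) * w x y
      ≤ A ^ (1/p) * B ^ (1 - 1/p) := by
    set F : V × V → ℝ := fun z => |(|f z.2| - |f z.1|)| * w z.1 z.2 ^ (1/p) with hF
    set G : V × V → ℝ :=
      fun z => (((|f z.1| ^ p + |f z.2| ^ p) / 2) * w z.1 z.2) ^ (1 - 1/p) with hG
    have hHold := Real.inner_le_Lp_mul_Lq_of_nonneg (s := (Finset.univ : Finset (V × V)))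
      (f := F) (g := G) hq
      (fun z _ => mul_nonneg (abs_nonneg _) (Real.rpow_nonneg (hwnn _ _) _))
      (fun z _ => Real.rpow_nonneg (mul_nonneg (by positivity) (hwnn _ _)) _)
    have e_fg : ∀ z : V × V, F z * G z
        = |(|f z.2| - |f z.1|)| * ((|f z.1| ^ p + |f z.2| ^ p) / 2) ^ (1 - 1/p) * w z.1 z.2 := by
      intro z
      by_cases hz : w z.1 z.2 = 0
      · have hinv : p⁻¹ < 1 := inv_lt_one_of_one_lt₀ hp
        have hcne : (1 : ℝ) - p⁻¹ ≠ 0 := sub_ne_zero.mpr (ne_of_gt hinv)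
        simp [hF, hG, hz, Real.zero_rpow (one_div_ne_zero hpne), Real.zero_rpow hcne]
      · have hwpos : 0 < w z.1 z.2 := lt_of_le_of_ne (hwnn _ _) (Ne.symm hz)
        have hMean : (0:ℝ) ≤ (|f z.1| ^ p + |f z.2| ^ p) / 2 := by positivity
        simp only [hF, hG]
        rw [Real.mul_rpow hMean hwpos.le]
        have hww : w z.1 z.2 ^ (1/p) * w z.1 z.2 ^ (1 - 1/p) = w z.1 z.2 := by
          rw [← Real.rpow_add hwpos, show 1/p + (1 - 1/p) = 1 by ring, Real.rpow_one]
        calc |(|f z.2| - |f z.1|)| * w z.1 z.2 ^ (1/p)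
              * (((|f z.1| ^ p + |f z.2| ^ p) / 2) ^ (1 - 1/p) * w z.1 z.2 ^ (1 - 1/p))
            = |(|f z.2| - |f z.1|)| * ((|f z.1| ^ p + |f z.2| ^ p) / 2) ^ (1 - 1/p)
              * (w z.1 z.2 ^ (1/p) * w z.1 z.2 ^ (1 - 1/p)) := by ring
          _ = |(|f z.2| - |f z.1|)| * ((|f z.1| ^ p + |f z.2| ^ p) / 2) ^ (1 - 1/p) * w z.1 z.2 := by
              rw [hww]
    have e_fp : ∀ z : V × V, F z ^ p = |(|f z.2| - |f z.1|)| ^ p * w z.1 z.2 := by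
      intro z
      simp only [hF]
      rw [Real.mul_rpow (abs_nonneg _) (Real.rpow_nonneg (hwnn _ _) _),
        ← Real.rpow_mul (hwnn _ _), one_div_mul_cancel hpne, Real.rpow_one]
    have e_gq : ∀ z : V × V, G z ^ (p / (p - 1))
        = ((|f z.1| ^ p + |f z.2| ^ p) / 2) * w z.1 z.2 := by
      intro z
      simp only [hG]
      rw [← Real.rpow_mul (mul_nonneg (by positivity) (hwnn _ _))]
      rw [show (1 - 1/p) * (p / (p - 1)) = 1 by field_simp, Real.rpow_one]
    have h1 : ∑ x, ∑ y, |(|f y| - |f x|)| * ((|f x| ^ p + |f y| ^ p) / 2) ^ (1 - 1/p) * w x y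
        = ∑ z : V × V, F z * G z := by
      rw [Fintype.sum_prod_type]
      exact Finset.sum_congr rfl fun x _ => Finset.sum_congr rfl fun y _ => (e_fg (x, y)).symm
    have h2 : ∑ z : V × V, F z ^ p = A := by
      rw [hAdef, Fintype.sum_prod_type]
      exact Finset.sum_congr rfl fun x _ => Finset.sum_congr rfl fun y _ => e_fp (x, y)
    have h3 : ∑ z : V × V, G z ^ (p / (p - 1)) = B := by
      rw [← hMW, Fintype.sum_prod_type]
      exact Finset.sum_congr rfl fun x _ => Finset.sum_congr rfl fun y _ => e_gq (x, y)
    rw [h1]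
    calc ∑ z : V × V, F z * G z
        ≤ (∑ z : V × V, F z ^ p) ^ (1/p) * (∑ z : V × V, G z ^ (p / (p - 1))) ^ (1 / (p / (p - 1))) :=
          hHold
      _ = A ^ (1/p) * B ^ (1 - 1/p) := by rw [h2, h3, hq1]
  -- combine
  have S4 : I * B ≤ (1/2) * (p * (A ^ (1/p) * B ^ (1 - 1/p))) := by
    calc I * B ≤ (1/2) * ∑ x, ∑ y, |(|f y| ^ p - |f x| ^ p)| * w x y := hco
      _ ≤ (1/2) * (p * ∑ x, ∑ y,
            |(|f y| - |f x|)| * ((|f x| ^ p + |f y| ^ p) / 2) ^ (1 - 1/p) * w x y) := by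
          linarith [hamg]
      _ ≤ (1/2) * (p * (A ^ (1/p) * B ^ (1 - 1/p))) := by nlinarith [hT, hp0]
  have hBc : 0 < B ^ (1 - 1/p) := Real.rpow_pos_of_pos hB _
  have hBsplit : B = B ^ (1/p) * B ^ (1 - 1/p) := by
    rw [← Real.rpow_add hB, show 1/p + (1 - 1/p) = 1 by ring, Real.rpow_one]
  have S5 : I * B ^ (1/p) ≤ (p/2) * A ^ (1/p) := by
    have hkey : (I * B ^ (1/p)) * B ^ (1 - 1/p) ≤ ((p/2) * A ^ (1/p)) * B ^ (1 - 1/p) := by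
      calc (I * B ^ (1/p)) * B ^ (1 - 1/p) = I * (B ^ (1/p) * B ^ (1 - 1/p)) := by ring
        _ = I * B := by rw [← hBsplit]
        _ ≤ (1/2) * (p * (A ^ (1/p) * B ^ (1 - 1/p))) := S4
        _ = ((p/2) * A ^ (1/p)) * B ^ (1 - 1/p) := by ring
    exact le_of_mul_le_mul_right hkey hBc
  have S6 : I ^ p * B ≤ (p/2) ^ p * A := by
    have hIB : 0 ≤ I * B ^ (1/p) := mul_nonneg hI0 (Real.rpow_nonneg hB.le _)
    have h6 := Real.rpow_le_rpow hIB S5 hp0.le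
    rw [Real.mul_rpow hI0 (Real.rpow_nonneg hB.le _),
      Real.mul_rpow (by positivity) (Real.rpow_nonneg hA _),
      ← Real.rpow_mul hB.le, ← Real.rpow_mul hA,
      one_div_mul_cancel hpne, Real.rpow_one, Real.rpow_one] at h6
    exact h6
  have S7 : A ≤ Af := by
    rw [hAdef, hAfdef]
    refine Finset.sum_le_sum fun x _ => Finset.sum_le_sum fun y _ => ?_
    exact mul_le_mul_of_nonneg_right
      (Real.rpow_le_rpow (abs_nonneg _) (abs_abs_sub_abs_le_abs_sub _ _) hp0.le) (hwnn x y)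
  -- finish
  rw [le_div_iff₀ hB]
  have hcst : (2:ℝ) ^ (p - 1) / p ^ p * (p/2) ^ p = 1/2 := by
    rw [Real.div_rpow hp0.le (by norm_num : (0:ℝ) ≤ 2),
      Real.rpow_sub (by norm_num : (0:ℝ) < 2), Real.rpow_one]
    have h2p : (0:ℝ) < 2 ^ p := Real.rpow_pos_of_pos (by norm_num) p
    have hpp : (0:ℝ) < p ^ p := Real.rpow_pos_of_pos hp0 p
    field_simp
  have hAf0 : 0 ≤ (p/2) ^ p * Af := mul_nonneg (by positivity) (hA.trans S7)
  calc 2 ^ (p - 1) / p ^ p * I ^ p * B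
      = (2 ^ (p - 1) / p ^ p) * (I ^ p * B) := by ring
    _ ≤ (2 ^ (p - 1) / p ^ p) * ((p/2) ^ p * Af) := by
        have hS67 : I ^ p * B ≤ (p/2) ^ p * Af := by
          calc I ^ p * B ≤ (p/2) ^ p * A := S6
            _ ≤ (p/2) ^ p * Af := mul_le_mul_of_nonneg_left S7 (by positivity)
        exact mul_le_mul_of_nonneg_left hS67 (by positivity)
    _ = (2 ^ (p - 1) / p ^ p * (p/2) ^ p) * Af := by ring
    _ = 1/2 * Af := by rw [hcst]
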